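/- For the degree sequence d^{e,q} = (0, q+1, q+2, ..., q+e) and any p with 1 ≤ p ≤ e, the normalized pure Betti number κ_{p,q}(d^{e,q}) := ∏_{1 ≤ k ≤ e, k ≠ p} (q+k)/|k-p| equals C(p+q-1, q) · C(e+q, p+q). -/

import Mathlib

open Finset

lemma fact1 (q : ℕ) : ∀ e : ℕ, (∏ k ∈ Icc 1 e, (q + k)) * q.factorial = (e + q).factorial := by
  intro e
  induction e with
  | zero => simp
  | succ n ih =>
      rw [Finset.prod_Icc_succ_top (by omega)]
      have : (n + 1 + q).factorial = (n + q).factorial * (q + (n+1)) := by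
        rw [show n + 1 + q = (n + q) + 1 by ring, Nat.factorial_succ]; ring
      rw [this, ← ih]; ring

lemma fact3 (p : ℕ) : ∀ m : ℕ, ∏ k ∈ Icc (p+1) (p+m), (k - p) = m.factorial := by
  intro m
  induction m with
  | zero => simp
  | succ n ih =>
      rw [show p + (n+1) = (p+n) + 1 from rfl, Finset.prod_Icc_succ_top (by omega), ih,
        Nat.factorial_succ]
      have : p + n + 1 - p = n + 1 := by omega
      rw [this]; ring

lemma fact2 (m : ℕ) : ∏ k ∈ Icc 1 m, (m + 1 - k) = m.factorial := by
  have h0 := fact3 0 m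
  simp only [Nat.zero_add, Nat.sub_zero] at h0
  rw [← h0]
  apply Finset.prod_nbij' (fun k => m + 1 - k) (fun k => m + 1 - k) <;>
    simp +contextual [Finset.mem_Icc] <;> omega

theorem stmt_0 (e q p : ℕ) (he : 1 ≤ e) (hq : 1 ≤ q) (hp1 : 1 ≤ p) (hpe : p ≤ e) :
    ∏ k ∈ (Finset.Icc 1 e).erase p, (((q : ℚ) + k) / |(k : ℚ) - p|) =
      (Nat.choose (p + q - 1) q : ℚ) * Nat.choose (e + q) (p + q) := by
  rw [Finset.prod_div_distrib]
  have hq0 : (q.factorial : ℚ) ≠ 0 := by exact_mod_cast q.factorial_ne_zero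
  have hqp : ((q : ℚ) + p) ≠ 0 := by positivity
  have hp0 : ((p-1).factorial : ℚ) ≠ 0 := by exact_mod_cast (p-1).factorial_ne_zero
  have he0 : ((e-p).factorial : ℚ) ≠ 0 := by exact_mod_cast (e-p).factorial_ne_zero
  -- numerator
  have hnum : (∏ k ∈ (Icc 1 e).erase p, ((q : ℚ) + k)) * ((q : ℚ) + p)
      = ((e + q).factorial / q.factorial : ℚ) := by
    rw [Finset.prod_erase_mul _ _ (by simp [Finset.mem_Icc]; omega), eq_div_iff hq0]
    have : (∏ k ∈ Icc 1 e, ((q : ℚ) + k)) = ((∏ k ∈ Icc 1 e, (q + k) : ℕ) : ℚ) := by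
      push_cast; rfl
    rw [this]
    exact_mod_cast congrArg (Nat.cast : ℕ → ℚ) (fact1 q e)
  -- denominator: split the erase set
  have hsplit : (Icc 1 e).erase p = Icc 1 (p-1) ∪ Icc (p+1) e := by
    ext k; simp [Finset.mem_Icc, Finset.mem_erase]; omega
  have hdisj : Disjoint (Icc 1 (p-1)) (Icc (p+1) e) := by
    rw [Finset.disjoint_left]; intro a; simp [Finset.mem_Icc]; omega
  have hden : ∏ k ∈ (Icc 1 e).erase p, |(k : ℚ) - p|
      = ((p-1).factorial : ℚ) * ((e-p).factorial : ℚ) := by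
    rw [hsplit, Finset.prod_union hdisj]
    have h1 : ∏ k ∈ Icc 1 (p-1), |(k : ℚ) - p| = ((p-1).factorial : ℚ) := by
      have hc : ∀ k ∈ Icc 1 (p-1), |(k : ℚ) - p| = (((p - k : ℕ)) : ℚ) := by
        intro k hk; simp [Finset.mem_Icc] at hk
        have hkp : k ≤ p := by omega
        have hcast : (k : ℚ) ≤ (p : ℚ) := by exact_mod_cast hkp
        rw [abs_of_nonpos (by linarith)]
        push_cast [Nat.cast_sub hkp]; ring
      rw [Finset.prod_congr rfl hc, ← Nat.cast_prod]
      have h := fact2 (p-1)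
      rw [show p - 1 + 1 = p by omega] at h
      rw [h]
    have h2 : ∏ k ∈ Icc (p+1) e, |(k : ℚ) - p| = ((e-p).factorial : ℚ) := by
      have hc : ∀ k ∈ Icc (p+1) e, |(k : ℚ) - p| = (((k - p : ℕ)) : ℚ) := by
        intro k hk; simp [Finset.mem_Icc] at hk
        have hkp : p ≤ k := by omega
        have hcast : (p : ℚ) ≤ (k : ℚ) := by exact_mod_cast hkp
        rw [abs_of_nonneg (by linarith)]
        push_cast [Nat.cast_sub hkp]; ring
      rw [Finset.prod_congr rfl hc, ← Nat.cast_prod]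
      have h := fact3 p (e - p)
      rw [show p + (e - p) = e by omega] at h
      rw [h]
    rw [h1, h2]
  rw [hden]
  have key : (e + q).factorial
      = Nat.choose (p + q - 1) q * Nat.choose (e + q) (p + q)
        * (q.factorial * (q + p) * (p-1).factorial * (e-p).factorial) := by
    have h1 : Nat.choose (p + q - 1) q * q.factorial * (p - 1).factorial
        = (p + q - 1).factorial := by
      have h := Nat.choose_mul_factorial_mul_factorial (show q ≤ p + q - 1 by omega)
      rw [show p + q - 1 - q = p - 1 by omega] at h
      exact h
    have h2 : Nat.choose (e + q) (p + q) * (p + q).factorial * (e - p).factorial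
        = (e + q).factorial := by
      have h := Nat.choose_mul_factorial_mul_factorial (show p + q ≤ e + q by omega)
      rw [show e + q - (p + q) = e - p by omega] at h
      exact h
    have h3 : (p + q).factorial = (p + q - 1).factorial * (q + p) := by
      rw [show p + q = (p + q - 1) + 1 by omega, Nat.factorial_succ,
        show p + q - 1 + 1 = q + p by omega]; ring
    calc (e + q).factorial
        = Nat.choose (e + q) (p + q) * (p + q).factorial * (e - p).factorial := h2.symm
      _ = Nat.choose (e + q) (p + q) * ((p + q - 1).factorial * (q + p)) * (e - p).factorial := by rw [h3]
      _ = Nat.choose (e + q) (p + q) * ((Nat.choose (p + q - 1) q * q.factorial * (p - 1).factorial) * (q + p)) * (e - p).factorial := by rw [h1]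
      _ = _ := by ring
  have hnum' : (∏ k ∈ (Icc 1 e).erase p, ((q : ℚ) + k))
      = ((e + q).factorial : ℚ) / (q.factorial * ((q : ℚ) + p)) := by
    rw [eq_div_iff (mul_ne_zero hq0 hqp)]
    calc (∏ k ∈ (Icc 1 e).erase p, ((q : ℚ) + k)) * (q.factorial * ((q : ℚ) + p))
        = ((∏ k ∈ (Icc 1 e).erase p, ((q : ℚ) + k)) * ((q : ℚ) + p)) * q.factorial := by ring
      _ = ((e + q).factorial : ℚ) := by rw [hnum]; field_simp
  rw [hnum']
  have keyQ : ((e + q).factorial : ℚ)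
      = (Nat.choose (p + q - 1) q : ℚ) * Nat.choose (e + q) (p + q)
        * (q.factorial * ((q:ℚ) + p) * (p-1).factorial * (e-p).factorial) := by
    exact_mod_cast congrArg (Nat.cast : ℕ → ℚ) key
  rw [keyQ]; field_simp
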